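/- Let ε₀, μ₀ > 0 and c = 1/√(ε₀μ₀). Let ε_r : ℝ³ → ℝ be twice continuously differentiable, σ : ℝ³ → ℝ continuous, and E : ℝ³ × ℝ → ℝ³ twice continuously differentiable. Assume the gauge condition ∇·(ε_r(x) E(x,t)) = 0 holds for all (x,t) (spatial divergence). Then E satisfies the stabilized equation (1/c²) ε_r ∂ₜ²E + ∇(∇·E) − ΔE − ε₀ ∇(∇·(ε_r E)) = −μ₀ σ ∂ₜE pointwise if and only if E satisfies Maxwell's equation (1/c²) ε_r ∂ₜ²E + ∇×(∇×E) = −μ₀ σ ∂ₜE pointwise. -/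

import Mathlib

open MeasureTheory

/-- Partial derivative of a scalar function on ℝ³ in the i-th coordinate direction. -/
noncomputable def pd (i : Fin 3) (f : (Fin 3 → ℝ) → ℝ) (x : Fin 3 → ℝ) : ℝ :=
  fderiv ℝ f x (Pi.single i 1)

/-- Divergence ∇·F of a vector field on ℝ³. -/
noncomputable def vdiv (F : (Fin 3 → ℝ) → (Fin 3 → ℝ)) (x : Fin 3 → ℝ) : ℝ :=
  ∑ i, pd i (fun y => F y i) x

/-- Gradient of a scalar function on ℝ³. -/
noncomputable def grad (f : (Fin 3 → ℝ) → ℝ) (x : Fin 3 → ℝ) : Fin 3 → ℝ :=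
  fun i => pd i f x

/-- Laplacian of a scalar function on ℝ³. -/
noncomputable def lap (f : (Fin 3 → ℝ) → ℝ) (x : Fin 3 → ℝ) : ℝ :=
  ∑ i, pd i (pd i f) x

/-- Componentwise Laplacian of a vector field on ℝ³. -/
noncomputable def vlap (F : (Fin 3 → ℝ) → (Fin 3 → ℝ)) (x : Fin 3 → ℝ) : Fin 3 → ℝ :=
  fun i => lap (fun y => F y i) x

/-- Curl ∇×F of a vector field on ℝ³. -/
noncomputable def curl (F : (Fin 3 → ℝ) → (Fin 3 → ℝ)) (x : Fin 3 → ℝ) : Fin 3 → ℝ :=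
  ![pd 1 (fun y => F y 2) x - pd 2 (fun y => F y 1) x,
    pd 2 (fun y => F y 0) x - pd 0 (fun y => F y 2) x,
    pd 0 (fun y => F y 1) x - pd 1 (fun y => F y 0) x]

/-- Euclidean dot product on ℝ³. -/
noncomputable def dot (u v : Fin 3 → ℝ) : ℝ := ∑ i, u i * v i

/-- Frobenius inner product ∇F : ∇G of the Jacobians of two vector fields on ℝ³. -/
noncomputable def frob (F G : (Fin 3 → ℝ) → (Fin 3 → ℝ)) (x : Fin 3 → ℝ) : ℝ :=
  ∑ i, ∑ j, pd j (fun y => F y i) x * pd j (fun y => G y i) x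

/-- First time derivative ∂ₜF of a time-dependent vector field on ℝ³ × ℝ. -/
noncomputable def dtv (F : (Fin 3 → ℝ) × ℝ → (Fin 3 → ℝ)) (x : Fin 3 → ℝ) (t : ℝ) :
    Fin 3 → ℝ :=
  fun i => deriv (fun s => F (x, s) i) t

/-- Second time derivative ∂ₜ²F of a time-dependent vector field on ℝ³ × ℝ. -/
noncomputable def dtv2 (F : (Fin 3 → ℝ) × ℝ → (Fin 3 → ℝ)) (x : Fin 3 → ℝ) (t : ℝ) :
    Fin 3 → ℝ :=
  fun i => deriv (fun s => deriv (fun s' => F (x, s') i) s) t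

lemma contDiff_pd {f : (Fin 3 → ℝ) → ℝ} (hf : ContDiff ℝ 2 f) (j : Fin 3) :
    ContDiff ℝ 1 (pd j f) := by
  have : pd j f = fun x => (ContinuousLinearMap.apply ℝ ℝ (Pi.single j 1 : Fin 3 → ℝ)) (fderiv ℝ f x) := rfl
  rw [this]
  exact (ContinuousLinearMap.apply ℝ ℝ _).contDiff.comp (hf.fderiv_right (m := 1) (by norm_num))

lemma pd_comm {f : (Fin 3 → ℝ) → ℝ} (hf : ContDiff ℝ 2 f) (i j : Fin 3) (x : Fin 3 → ℝ) :
    pd i (pd j f) x = pd j (pd i f) x := by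
  have hd : ContDiff ℝ 1 (fderiv ℝ f) := hf.fderiv_right (m := 1) (by norm_num)
  have key : ∀ u v : Fin 3 → ℝ,
      fderiv ℝ (fun y => fderiv ℝ f y u) x v = fderiv ℝ (fderiv ℝ f) x v u := by
    intro u v
    rw [fderiv_clm_apply ((hd.differentiable (by norm_num)) x) (differentiableAt_const u)]
    simp
  have hsymm : IsSymmSndFDerivAt ℝ f x := hf.contDiffAt.isSymmSndFDerivAt (by simp)
  show fderiv ℝ (fun y => fderiv ℝ f y (Pi.single j 1)) x (Pi.single i 1)
      = fderiv ℝ (fun y => fderiv ℝ f y (Pi.single i 1)) x (Pi.single j 1)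
  rw [key, key]
  exact hsymm _ _

lemma pd_sub {f g : (Fin 3 → ℝ) → ℝ} (hf : DifferentiableAt ℝ f x) (hg : DifferentiableAt ℝ g x)
    (i : Fin 3) : pd i (fun y => f y - g y) x = pd i f x - pd i g x := by
  simp [pd, fderiv_fun_sub hf hg]

lemma pd_add {f g : (Fin 3 → ℝ) → ℝ} (hf : DifferentiableAt ℝ f x) (hg : DifferentiableAt ℝ g x)
    (i : Fin 3) : pd i (fun y => f y + g y) x = pd i f x + pd i g x := by
  simp [pd, fderiv_fun_add hf hg]

lemma curl_curl {F : (Fin 3 → ℝ) → (Fin 3 → ℝ)} (hF : ContDiff ℝ 2 F) (x : Fin 3 → ℝ) :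
    curl (curl F) x = fun i => grad (vdiv F) x i - vlap F x i := by
  have hFk : ∀ k : Fin 3, ContDiff ℝ 2 (fun y => F y k) := fun k => (contDiff_pi.1 hF k)
  have hd : ∀ (j k : Fin 3) (y : Fin 3 → ℝ), DifferentiableAt ℝ (pd j (fun z => F z k)) y :=
    fun j k y => ((contDiff_pd (hFk k) j).differentiable (by norm_num)) y
  have hgd : ∀ i : Fin 3, grad (vdiv F) x i =
      pd i (pd 0 (fun z => F z 0)) x + pd i (pd 1 (fun z => F z 1)) x
        + pd i (pd 2 (fun z => F z 2)) x := by
    intro i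
    have : vdiv F = fun y => (pd 0 (fun z => F z 0) y + pd 1 (fun z => F z 1) y)
        + pd 2 (fun z => F z 2) y := by
      funext y; simp [vdiv, Fin.sum_univ_three]
    rw [grad, this, pd_add ((hd 0 0 x).fun_add (hd 1 1 x)) (hd 2 2 x) i,
      pd_add (hd 0 0 x) (hd 1 1 x) i]
  have hc : ∀ (i j k : Fin 3), pd i (pd j (fun z => F z k)) x = pd j (pd i (fun z => F z k)) x :=
    fun i j k => pd_comm (hFk k) i j x
  funext i
  fin_cases i <;>
    simp only [curl, Matrix.cons_val_zero, Matrix.cons_val_one, Matrix.head_cons,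
      Matrix.cons_val_two, Matrix.tail_cons, vlap, lap, Fin.sum_univ_three, hgd, Fin.isValue,
      Fin.zero_eta, Fin.mk_one, Fin.reduceFinMk]
  · rw [pd_sub (hd _ _ x) (hd _ _ x), pd_sub (hd _ _ x) (hd _ _ x), hc 1 0 1, hc 2 0 2]; ring
  · rw [pd_sub (hd _ _ x) (hd _ _ x), pd_sub (hd _ _ x) (hd _ _ x), hc 2 1 2, hc 0 1 0]; ring
  · rw [pd_sub (hd _ _ x) (hd _ _ x), pd_sub (hd _ _ x) (hd _ _ x), hc 0 2 0, hc 1 2 1]; ring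

/-- Under the gauge condition ∇·(ε_r E) = 0, the stabilized equation
(1/c²)ε_r∂ₜ²E + ∇(∇·E) − ΔE − ε₀∇(∇·(ε_r E)) = −μ₀σ∂ₜE is equivalent to Maxwell's
equation (1/c²)ε_r∂ₜ²E + ∇×(∇×E) = −μ₀σ∂ₜE. -/
theorem stabilized_iff_maxwell (ε₀ μ₀ : ℝ) (hε₀ : 0 < ε₀) (hμ₀ : 0 < μ₀)
    (c : ℝ) (hc : c = 1 / Real.sqrt (ε₀ * μ₀))
    (εr : (Fin 3 → ℝ) → ℝ) (hεr : ContDiff ℝ 2 εr)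
    (σ : (Fin 3 → ℝ) → ℝ) (hσ : Continuous σ)
    (E : (Fin 3 → ℝ) × ℝ → (Fin 3 → ℝ)) (hE : ContDiff ℝ 2 E)
    (hgauge : ∀ (x : Fin 3 → ℝ) (t : ℝ), vdiv (fun y => εr y • E (y, t)) x = 0) :
    (∀ (x : Fin 3 → ℝ) (t : ℝ),
        (εr x / c ^ 2) • dtv2 E x t
          + grad (vdiv (fun y => E (y, t))) x
          - vlap (fun y => E (y, t)) x
          - ε₀ • grad (vdiv (fun y => εr y • E (y, t))) x
        = -((μ₀ * σ x) • dtv E x t))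
    ↔ (∀ (x : Fin 3 → ℝ) (t : ℝ),
        (εr x / c ^ 2) • dtv2 E x t + curl (curl (fun y => E (y, t))) x
        = -((μ₀ * σ x) • dtv E x t)) := by
  have hzero : ∀ (x : Fin 3 → ℝ) (t : ℝ),
      grad (vdiv (fun y => εr y • E (y, t))) x = 0 := by
    intro x t
    have hz : vdiv (fun y => εr y • E (y, t)) = fun _ => (0:ℝ) := funext fun y => hgauge y t
    funext i
    simp [grad, pd, hz]
  have hLHS : ∀ (x : Fin 3 → ℝ) (t : ℝ),
      (εr x / c ^ 2) • dtv2 E x t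
          + grad (vdiv (fun y => E (y, t))) x
          - vlap (fun y => E (y, t)) x
          - ε₀ • grad (vdiv (fun y => εr y • E (y, t))) x
        = (εr x / c ^ 2) • dtv2 E x t + curl (curl (fun y => E (y, t))) x := by
    intro x t
    have hF : ContDiff ℝ 2 (fun y => E (y, t)) := hE.comp (contDiff_id.prodMk contDiff_const)
    rw [hzero, smul_zero, sub_zero, curl_curl hF x]
    funext i
    simp only [Pi.add_apply, Pi.sub_apply]
    ring
  constructor
  · intro h x t
    rw [← hLHS x t]
    exact h x t
  · intro h x t
    rw [hLHS x t]
    exact h x t
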